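/- Let p ∈ ℝ^d be nonzero and A ∈ ℝ^{d×d}. Then for every r > 0, the maximum over vectors v with |v| = r of p·v + (1/2) v·Av differs from r|p| + (1/2) r² |p|⁻² (p·Ap) by at most 2 r³ ‖A‖² |p|⁻¹. -/

import Mathlib

open scoped RealInnerProductSpace

/-- For nonzero `p` and a matrix (linear map) `A`, the maximum over the sphere of radius `r`
of `v ↦ p·v + (1/2) v·Av` differs from `r|p| + (1/2) r² |p|⁻² p·Ap` by at most
`2 r³ ‖A‖² |p|⁻¹`. -/
theorem sphere_quadratic_max_estimate {d : ℕ}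
    (p : EuclideanSpace ℝ (Fin d)) (hp : p ≠ 0)
    (A : EuclideanSpace ℝ (Fin d) →L[ℝ] EuclideanSpace ℝ (Fin d))
    (r : ℝ) (hr : 0 < r) (M : ℝ)
    (hM : IsGreatest ((fun v => ⟪p, v⟫ + (1 / 2) * ⟪v, A v⟫) ''
      Metric.sphere (0 : EuclideanSpace ℝ (Fin d)) r) M) :
    |M - (r * ‖p‖ + (1 / 2) * r ^ 2 * (‖p‖⁻¹) ^ 2 * ⟪p, A p⟫)| ≤
      2 * r ^ 3 * ‖A‖ ^ 2 * ‖p‖⁻¹ := by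
  obtain ⟨⟨v, hv, hvM⟩, hub⟩ := hM
  have hp' : (0:ℝ) < ‖p‖ := norm_pos_iff.mpr hp
  set v₀ : EuclideanSpace ℝ (Fin d) := (r / ‖p‖) • p with hv₀def
  have hv₀norm : ‖v₀‖ = r := by
    rw [hv₀def, norm_smul, Real.norm_eq_abs, abs_of_pos (div_pos hr hp')]
    field_simp
  have hv₀mem : v₀ ∈ Metric.sphere (0 : EuclideanSpace ℝ (Fin d)) r := by
    simpa [mem_sphere_iff_norm] using hv₀norm
  have hvnorm : ‖v‖ = r := by simpa [mem_sphere_iff_norm] using hv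
  -- value at v₀
  have hpv₀ : ⟪p, v₀⟫ = r * ‖p‖ := by
    rw [hv₀def, real_inner_smul_right, real_inner_self_eq_norm_sq]
    field_simp
  have hAv₀ : ⟪v₀, A v₀⟫ = (r / ‖p‖) ^ 2 * ⟪p, A p⟫ := by
    rw [hv₀def, map_smul, real_inner_smul_left, real_inner_smul_right]
    ring
  have htarget : ⟪p, v₀⟫ + (1 / 2) * ⟪v₀, A v₀⟫
      = r * ‖p‖ + (1 / 2) * r ^ 2 * (‖p‖⁻¹) ^ 2 * ⟪p, A p⟫ := by
    rw [hpv₀, hAv₀, div_pow]; field_simp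
  -- lower bound: M ≥ target
  have hlow : r * ‖p‖ + (1 / 2) * r ^ 2 * (‖p‖⁻¹) ^ 2 * ⟪p, A p⟫ ≤ M := by
    rw [← htarget]; exact hub ⟨v₀, hv₀mem, rfl⟩
  -- upper bound
  set s := ‖v - v₀‖ with hs
  have hs0 : 0 ≤ s := norm_nonneg _
  have h1 : ⟪p, v⟫ ≤ r * ‖p‖ := by
    calc ⟪p, v⟫ ≤ ‖p‖ * ‖v‖ := real_inner_le_norm p v
    _ = r * ‖p‖ := by rw [hvnorm]; ring
  have hsq : s ^ 2 * ‖p‖ = 2 * r * (r * ‖p‖ - ⟪p, v⟫) := by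
    have := @norm_sub_sq_real (EuclideanSpace ℝ (Fin d)) _ _ v v₀
    have hvv₀ : ⟪v, v₀⟫ = (r / ‖p‖) * ⟪p, v⟫ := by
      rw [hv₀def, real_inner_smul_right, real_inner_comm]
    rw [← hs, hvv₀, hvnorm, hv₀norm] at this
    rw [this]; field_simp; ring
  have hAnn : (0:ℝ) ≤ ‖A‖ := norm_nonneg _
  have h3 : ⟪v, A v⟫ - ⟪v₀, A v₀⟫ ≤ 2 * r * ‖A‖ * s := by
    have key : ⟪v, A v⟫ - ⟪v₀, A v₀⟫ = ⟪v - v₀, A v⟫ + ⟪v₀, A (v - v₀)⟫ := by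
      rw [map_sub]
      rw [inner_sub_left, inner_sub_right]; ring
    have b1 : ⟪v - v₀, A v⟫ ≤ s * (‖A‖ * r) := by
      calc ⟪v - v₀, A v⟫ ≤ ‖v - v₀‖ * ‖A v‖ := real_inner_le_norm _ _
      _ ≤ s * (‖A‖ * r) := by
          rw [← hs]
          apply mul_le_mul_of_nonneg_left _ hs0
          calc ‖A v‖ ≤ ‖A‖ * ‖v‖ := A.le_opNorm v
          _ = ‖A‖ * r := by rw [hvnorm]
    have b2 : ⟪v₀, A (v - v₀)⟫ ≤ r * (‖A‖ * s) := by
      calc ⟪v₀, A (v - v₀)⟫ ≤ ‖v₀‖ * ‖A (v - v₀)‖ := real_inner_le_norm _ _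
      _ ≤ r * (‖A‖ * s) := by
          rw [hv₀norm]
          exact mul_le_mul_of_nonneg_left (by rw [hs]; exact A.le_opNorm _) hr.le
    rw [key]; nlinarith
  have hvM' : ⟪p, v⟫ + (1 / 2) * ⟪v, A v⟫ = M := hvM
  have hkey : (0:ℝ) ≤ (s * ‖p‖ - r ^ 2 * ‖A‖) ^ 2 := sq_nonneg _
  have hsq2 : s ^ 2 * ‖p‖ ^ 2 = 2 * r * (r * ‖p‖ - ⟪p, v⟫) * ‖p‖ := by
    rw [sq ‖p‖, ← mul_assoc, hsq]
  have hineq' : (-(r * ‖p‖ - ⟪p, v⟫) + r * ‖A‖ * s) * ‖p‖ ≤ 2 * r ^ 3 * ‖A‖ ^ 2 := by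
    nlinarith [mul_nonneg (mul_nonneg (pow_nonneg hr.le 4) hAnn) hAnn]
  have hineq : -(r * ‖p‖ - ⟪p, v⟫) + r * ‖A‖ * s ≤ 2 * r ^ 3 * ‖A‖ ^ 2 * ‖p‖⁻¹ := by
    rw [show (2 * r ^ 3 * ‖A‖ ^ 2 * ‖p‖⁻¹ : ℝ) = (2 * r ^ 3 * ‖A‖ ^ 2) / ‖p‖ by ring,
      le_div_iff₀ hp']
    linarith [hineq']
  have hupper : M ≤ r * ‖p‖ + (1 / 2) * r ^ 2 * (‖p‖⁻¹) ^ 2 * ⟪p, A p⟫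
      + 2 * r ^ 3 * ‖A‖ ^ 2 * ‖p‖⁻¹ := by
    rw [← htarget]
    linarith [h3, hineq, hvM', hpv₀]
  have hRHS : (0:ℝ) ≤ 2 * r ^ 3 * ‖A‖ ^ 2 * ‖p‖⁻¹ := by positivity
  rw [abs_le]
  constructor
  · linarith
  · linarith
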